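/- In a family of n disks in the plane such that no disk contains another, if some point of the plane is covered by d of the disks and lies on the boundary circle of one disk D, then the circle bounding D intersects the boundary circles of at least d − 1 other disks in the family. -/

import Mathlib

lemma spheres_inter_aux (a b : EuclideanSpace ℝ (Fin 2)) (r₁ r₂ : ℝ)
    (h1 : 0 ≤ r₁) (h2 : 0 ≤ r₂)
    (hlo : |r₁ - r₂| ≤ dist a b) (hhi : dist a b ≤ r₁ + r₂) :
    (Metric.sphere a r₁ ∩ Metric.sphere b r₂).Nonempty := by
  have hrank : (1:Cardinal) < Module.rank ℝ (EuclideanSpace ℝ (Fin 2)) := by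
    rw [rank_eq_card_basis (EuclideanSpace.basisFun (Fin 2) ℝ).toBasis]; simp
  set D := dist a b with hD
  rcases eq_or_lt_of_le (dist_nonneg : 0 ≤ D) with h0 | h0
  · have hab : a = b := by rw [← dist_eq_zero]; exact h0.symm
    have hr : r₁ = r₂ := by
      have : |r₁ - r₂| ≤ 0 := by rw [h0]; exact hlo
      have := abs_nonpos_iff.mp this
      linarith
    obtain ⟨x, hx⟩ := (NormedSpace.sphere_nonempty (E := EuclideanSpace ℝ (Fin 2))).mpr h1
    exact ⟨x, hx, by simpa [hab, hr] using hx⟩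
  · have hDne : D ≠ 0 := ne_of_gt h0
    set u : EuclideanSpace ℝ (Fin 2) := D⁻¹ • (b - a) with hu
    have hnu : ‖u‖ = 1 := by
      rw [hu, norm_smul, norm_inv, Real.norm_eq_abs, abs_of_pos h0,
        ← dist_eq_norm']
      field_simp
    have hba : b - a = D • u := by
      rw [hu, smul_smul, mul_inv_cancel₀ hDne, one_smul]
    set p := a + r₁ • u with hp
    set q := a - r₁ • u with hq
    have hpS : p ∈ Metric.sphere a r₁ := by
      simp [hp, dist_eq_norm, norm_smul, hnu, abs_of_nonneg h1]
    have hqS : q ∈ Metric.sphere a r₁ := by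
      simp [hq, dist_eq_norm, norm_smul, hnu, abs_of_nonneg h1]
    have hfp : dist p b = |r₁ - D| := by
      have h' : p - b = (r₁ - D) • u := by
        rw [hp, sub_smul, ← hba]; abel
      rw [dist_eq_norm, h', norm_smul, hnu, Real.norm_eq_abs, mul_one]
    have hfq : dist q b = r₁ + D := by
      have h' : q - b = -((r₁ + D) • u) := by
        rw [hq, add_smul, ← hba]; abel
      rw [dist_eq_norm, h', norm_neg, norm_smul, hnu, Real.norm_eq_abs, mul_one,
        abs_of_nonneg (by linarith)]
    have habs := abs_le.mp hlo
    have hmem : r₂ ∈ Set.Icc (dist p b) (dist q b) := by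
      rw [hfp, hfq]
      constructor
      · rw [abs_le]; constructor <;> linarith
      · linarith
    have hcont : ContinuousOn (fun x => dist x b) (Metric.sphere a r₁) :=
      (Continuous.dist continuous_id continuous_const).continuousOn
    obtain ⟨x, hxS, hx⟩ := (isPreconnected_sphere hrank a r₁).intermediate_value
      hpS hqS hcont hmem
    exact ⟨x, hxS, by rw [Metric.mem_sphere]; exact hx⟩

theorem deep_point_forces_intersections (n d : ℕ)
    (center : Fin n → EuclideanSpace ℝ (Fin 2)) (rad : Fin n → ℝ)
    (hrad : ∀ i, 0 < rad i)
    (hnc : ∀ i j : Fin n, i ≠ j →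
      ¬ Metric.closedBall (center i) (rad i) ⊆ Metric.closedBall (center j) (rad j))
    (z : EuclideanSpace ℝ (Fin 2)) (i₀ : Fin n)
    (hz : z ∈ Metric.sphere (center i₀) (rad i₀))
    (S : Finset (Fin n)) (hS : S.card = d)
    (hcov : ∀ i ∈ S, z ∈ Metric.closedBall (center i) (rad i)) :
    d - 1 ≤ {j : Fin n | j ≠ i₀ ∧
      (Metric.sphere (center j) (rad j) ∩ Metric.sphere (center i₀) (rad i₀)).Nonempty}.ncard := by
  set A := {j : Fin n | j ≠ i₀ ∧
      (Metric.sphere (center j) (rad j) ∩ Metric.sphere (center i₀) (rad i₀)).Nonempty}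
  have hsub : ((S.erase i₀ : Finset (Fin n)) : Set (Fin n)) ⊆ A := by
    intro j hj
    simp only [Finset.coe_erase, Set.mem_diff, Set.mem_singleton_iff] at hj
    obtain ⟨hjS, hjne⟩ := hj
    refine ⟨hjne, ?_⟩
    have hzj := hcov j hjS
    rw [Metric.mem_closedBall] at hzj
    rw [Metric.mem_sphere] at hz
    have hhi : dist (center j) (center i₀) ≤ rad j + rad i₀ := by
      calc dist (center j) (center i₀) ≤ dist (center j) z + dist z (center i₀) :=
            dist_triangle _ _ _
        _ ≤ rad j + rad i₀ := by rw [dist_comm (center j) z]; linarith [le_of_eq hz]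
    have h1 : ¬ (rad j + dist (center j) (center i₀) ≤ rad i₀) := by
      intro h
      exact hnc j i₀ hjne (Metric.closedBall_subset_closedBall' h)
    have h2 : ¬ (rad i₀ + dist (center i₀) (center j) ≤ rad j) := by
      intro h
      exact hnc i₀ j (Ne.symm hjne) (Metric.closedBall_subset_closedBall' h)
    rw [dist_comm (center i₀) (center j)] at h2
    push_neg at h1 h2
    exact spheres_inter_aux _ _ _ _ (hrad j).le (hrad i₀).le
      (abs_le.mpr ⟨by linarith, by linarith⟩) hhi
  have h1 : (S.erase i₀).card ≤ A.ncard := by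
    rw [← Set.ncard_coe_finset]
    exact Set.ncard_le_ncard hsub (Set.toFinite A)
  calc d - 1 ≤ (S.erase i₀).card := by rw [← hS]; exact Finset.pred_card_le_card_erase
    _ ≤ A.ncard := h1
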